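/- Let n ≥ 2, k > 0 and for each i let p_i > 0, q_i − p_i > 0, η_i > 0, ζ_i ≥ 0 with η_i^k ≥ √(ζ_i^k). Then β_{ζ,k}^{(p,q)}(φ; η) ≥ β_k(φ; η) · ∏_{i=1}^n e^{−ζ_i^k/η_i^k} ₁F_{1,k}(q_i − p_i; q_i; η_i^k/k + ζ_i^k/η_i^k), where β_k(φ; η) = (1/k^{n−1}) ∫_{E_{n-1}} ∏_i t_i^{φ_i/k−1} e^{−η_i^k/(k t_i)} dt. -/

import Mathlib

open MeasureTheory Real Set

noncomputable section

/-- Open standard (n-1)-simplex in ℝ^{n-1}. -/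
def simplexInt (n : ℕ) : Set (Fin (n-1) → ℝ) :=
  {t | (∀ i, 0 < t i) ∧ ∑ i, t i < 1}

/-- Barycentric coordinates: `t_1, …, t_{n-1}` and `t_n = 1 - ∑_{i<n} t_i`. -/
def bary (n : ℕ) (t : Fin (n-1) → ℝ) (i : Fin n) : ℝ :=
  if h : (i : ℕ) < n - 1 then t ⟨i, h⟩ else 1 - ∑ j, t j

/-- Product of the n barycentric coordinates. -/
def piT (n : ℕ) (t : Fin (n-1) → ℝ) : ℝ := ∏ i : Fin n, bary n t i

/-- Euler-integral confluent hypergeometric k-function ₁F_{1,k}(a;b;l). -/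
def F1k (k a b l : ℝ) : ℝ :=
  (1/k) * (Real.Gamma b / (Real.Gamma a * Real.Gamma (b-a))) *
    ∫ u in Set.Ioo (0:ℝ) 1, u ^ (a/k - 1) * (1-u) ^ ((b-a)/k - 1) * Real.exp (l*u)

/-- Beta k-function of n variables. -/
def betaK (n : ℕ) (k : ℝ) (φ : Fin n → ℝ) : ℝ :=
  (1/k^(n-1)) * ∫ t in simplexInt n, ∏ i, bary n t i ^ (φ i / k - 1)

/-- Extended beta k-function β_k(φ; η). -/
def betaKe (n : ℕ) (k : ℝ) (φ : Fin n → ℝ) (η : ℝ) : ℝ :=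
  (1/k^(n-1)) * ∫ t in simplexInt n,
    (∏ i, bary n t i ^ (φ i / k - 1)) * Real.exp (-(η^k)/(k * piT n t))

/-- Generalized beta k-function of the first kind. -/
def betaFirst (n : ℕ) (k a b η ζ : ℝ) (φ : Fin n → ℝ) : ℝ :=
  (1/k^(n-1)) * ∫ t in simplexInt n,
    (∏ i, bary n t i ^ (φ i / k - 1)) *
      F1k k a b (-(η^k)/(k * piT n t) - ζ^k * piT n t / η^k)

/-- Generalized beta k-function of the second kind. -/
def betaSecond (n : ℕ) (k : ℝ) (p q η ζ φ : Fin n → ℝ) : ℝ :=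
  (1/k^(n-1)) * ∫ t in simplexInt n,
    ∏ i, (bary n t i ^ (φ i / k - 1) *
      F1k k (p i) (q i) (-((η i)^k)/(k * bary n t i) - (ζ i)^k * bary n t i / (η i)^k))

/-- Extended beta k-function of the second kind (vector η). -/
def betaKe2 (n : ℕ) (k : ℝ) (φ η : Fin n → ℝ) : ℝ :=
  (1/k^(n-1)) * ∫ t in simplexInt n,
    ∏ i, (bary n t i ^ (φ i / k - 1) * Real.exp (-((η i)^k)/(k * bary n t i)))

lemma betaInt {c d : ℝ} (hc : -1 < c) (hd : -1 < d) :
    IntegrableOn (fun u : ℝ => u ^ c * (1-u) ^ d) (Ioo 0 1) := by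
  have bdd : ∀ (e : ℝ) (x lo : ℝ), 0 < lo → lo ≤ x → x ≤ 1 → x ^ e ≤ max (lo ^ e) 1 := by
    intro e x lo hlo hx h1
    rcases le_or_gt e 0 with h | h
    · exact le_max_of_le_left (rpow_le_rpow_of_nonpos hlo hx h)
    · exact le_max_of_le_right (by
        calc x ^ e ≤ 1 ^ e := rpow_le_rpow (by linarith) h1 h.le
          _ = 1 := one_rpow e)
  have h1 : IntegrableOn (fun u : ℝ => u ^ c * (1-u) ^ d) (Ioc 0 2⁻¹) := by
    have hint : IntegrableOn (fun u : ℝ => u ^ c) (Ioc 0 2⁻¹) := by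
      have := intervalIntegral.intervalIntegrable_rpow' (r := c) (a := 0) (b := 2⁻¹) hc
      rwa [intervalIntegrable_iff_integrableOn_Ioc_of_le (by norm_num)] at this
    have : IntegrableOn (fun u : ℝ => (1-u) ^ d * u ^ c) (Ioc 0 2⁻¹) := by
      apply Integrable.bdd_mul (c := max ((2:ℝ)⁻¹ ^ d) 1) hint
      · exact ((measurable_const.sub measurable_id).pow_const d).aestronglyMeasurable
      · filter_upwards [ae_restrict_mem measurableSet_Ioc] with x hx
        rw [norm_of_nonneg (rpow_nonneg (by linarith [hx.2, hx.1] : (0:ℝ) ≤ 1 - x) _)]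
        exact bdd d (1-x) 2⁻¹ (by norm_num) (by linarith [hx.2]) (by linarith [hx.1])
    exact this.congr_fun (fun x _ => mul_comm _ _) measurableSet_Ioc
  have h2 : IntegrableOn (fun u : ℝ => u ^ c * (1-u) ^ d) (Ioo 2⁻¹ 1) := by
    have hint : IntegrableOn (fun u : ℝ => (1-u) ^ d) (Ioo 2⁻¹ 1) := by
      have base := intervalIntegral.intervalIntegrable_rpow' (r := d) (a := 2⁻¹) (b := 0) hd
      have := base.comp_sub_left 1
      rw [intervalIntegrable_iff_integrableOn_Ioc_of_le (by norm_num : (1:ℝ)-2⁻¹ ≤ 1-0)] at this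
      have h12 : ((1:ℝ)-2⁻¹) = 2⁻¹ := by norm_num
      have h10 : ((1:ℝ)-0) = 1 := by norm_num
      rw [h12, h10] at this
      exact (this.mono_set Ioo_subset_Ioc_self).congr_fun (fun x _ => rfl) measurableSet_Ioo
    apply Integrable.bdd_mul (c := max ((2:ℝ)⁻¹ ^ c) 1) hint
    · exact (measurable_id.pow_const c).aestronglyMeasurable
    · filter_upwards [ae_restrict_mem measurableSet_Ioo] with x hx
      rw [norm_of_nonneg (rpow_nonneg (by linarith [hx.1] : (0:ℝ) ≤ x) _)]
      exact bdd c x 2⁻¹ (by norm_num) hx.1.le hx.2.le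
  have : IntegrableOn (fun u : ℝ => u ^ c * (1-u) ^ d) (Ioc 0 2⁻¹ ∪ Ioo 2⁻¹ 1) := h1.union h2
  apply this.mono_set
  intro x hx
  rcases le_or_gt x 2⁻¹ with h | h
  · exact Or.inl ⟨hx.1, h⟩
  · exact Or.inr ⟨h, hx.2⟩

lemma betaIntExp {c d : ℝ} (hc : -1 < c) (hd : -1 < d) (l r : ℝ) :
    IntegrableOn (fun u : ℝ => u ^ c * (1-u) ^ d * Real.exp (l*u + r)) (Ioo 0 1) := by
  have : IntegrableOn (fun u : ℝ => Real.exp (l*u + r) * (u ^ c * (1-u) ^ d)) (Ioo 0 1) := by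
    apply Integrable.bdd_mul (c := Real.exp (|l| + r)) (betaInt hc hd)
    · exact (((measurable_const.mul measurable_id).add measurable_const).exp).aestronglyMeasurable
    · filter_upwards [ae_restrict_mem measurableSet_Ioo] with x hx
      rw [norm_of_nonneg (exp_nonneg _)]
      apply exp_le_exp.2
      have : l * x ≤ |l| := by
        calc l * x ≤ |l * x| := le_abs_self _
          _ = |l| * |x| := abs_mul l x
          _ ≤ |l| * 1 := by
              apply mul_le_mul_of_nonneg_left _ (abs_nonneg l)
              rw [abs_of_pos hx.1]; exact hx.2.le
          _ = |l| := mul_one _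
      linarith
  exact this.congr_fun (fun x _ => by ring) measurableSet_Ioo

lemma F1k_exponents {k a b : ℝ} (hk : 0 < k) (ha : 0 < a) (hba : 0 < b - a) :
    -1 < a/k - 1 ∧ -1 < (b-a)/k - 1 :=
  ⟨by have := div_pos ha hk; linarith, by have := div_pos hba hk; linarith⟩

lemma F1k_coef_nonneg {k a b : ℝ} (hk : 0 < k) (ha : 0 < a) (hba : 0 < b - a) :
    0 ≤ (1/k) * (Real.Gamma b / (Real.Gamma a * Real.Gamma (b-a))) := by
  have hb : 0 < b := by linarith
  have := Real.Gamma_pos_of_pos ha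
  have := Real.Gamma_pos_of_pos hba
  have := Real.Gamma_pos_of_pos hb
  positivity

lemma F1k_mono {k a b : ℝ} (hk : 0 < k) (ha : 0 < a) (hba : 0 < b - a) :
    Monotone (F1k k a b) := by
  intro l l' hll
  obtain ⟨hc, hd⟩ := F1k_exponents hk ha hba
  unfold F1k
  apply mul_le_mul_of_nonneg_left _ (F1k_coef_nonneg hk ha hba)
  apply setIntegral_mono_on
  · exact ((betaIntExp hc hd l 0).congr_fun (fun x _ => by simp only [add_zero]) measurableSet_Ioo)
  · exact ((betaIntExp hc hd l' 0).congr_fun (fun x _ => by simp only [add_zero]) measurableSet_Ioo)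
  · exact measurableSet_Ioo
  · intro x hx
    have hx0 : (0:ℝ) ≤ x ^ (a/k-1) * (1-x) ^ ((b-a)/k-1) :=
      mul_nonneg (rpow_nonneg hx.1.le _) (rpow_nonneg (by linarith [hx.2] : (0:ℝ) ≤ 1-x) _)
    rw [mul_assoc, mul_assoc]
    exact mul_le_mul_of_nonneg_left
      (mul_le_mul_of_nonneg_left (exp_le_exp.2 (mul_le_mul_of_nonneg_right hll hx.1.le))
        (rpow_nonneg (by linarith [hx.2] : (0:ℝ) ≤ 1-x) _)) (rpow_nonneg hx.1.le _)

lemma F1k_nonneg {k a b : ℝ} (hk : 0 < k) (ha : 0 < a) (hba : 0 < b - a) (l : ℝ) :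
    0 ≤ F1k k a b l := by
  apply mul_nonneg (F1k_coef_nonneg hk ha hba)
  apply setIntegral_nonneg measurableSet_Ioo
  intro x hx
  exact mul_nonneg (mul_nonneg (rpow_nonneg hx.1.le _)
    (rpow_nonneg (by linarith [hx.2] : (0:ℝ) ≤ 1-x) _)) (exp_nonneg _)

lemma reflect01 (f : ℝ → ℝ) : ∫ u in Ioo (0:ℝ) 1, f (1-u) = ∫ u in Ioo (0:ℝ) 1, f u := by
  rw [← integral_Ioc_eq_integral_Ioo, ← integral_Ioc_eq_integral_Ioo,
      ← intervalIntegral.integral_of_le zero_le_one, ← intervalIntegral.integral_of_le zero_le_one]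
  simpa using intervalIntegral.integral_comp_sub_left f 1

lemma key_lemma {k p q A B s : ℝ} (hk : 0 < k) (hp : 0 < p) (hqp : 0 < q - p)
    (hA : 0 < A) (hB : 0 ≤ B) (hs : 0 < s) (hs1 : s < 1) :
    Real.exp (-A/(k*s)) * (Real.exp (-B/A) * F1k k (q-p) q (A/k + B/A)) ≤
      F1k k p q (-A/(k*s) - B*s/A) := by
  obtain ⟨hc, hd⟩ := F1k_exponents hk hp hqp
  have hqpp : q - (q - p) = p := by ring
  set L : ℝ := A/(k*s) + B*s/A with hL
  set M : ℝ := A/k + B/A with hM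
  set r : ℝ := -A/(k*s) + -B/A with hr
  -- the reflected RHS integral
  have hrefl : (∫ u in Ioo (0:ℝ) 1, u ^ (p/k-1) * (1-u) ^ ((q-p)/k-1) * Real.exp ((-A/(k*s) - B*s/A)*u))
      = ∫ u in Ioo (0:ℝ) 1, u ^ ((q-p)/k-1) * (1-u) ^ (p/k-1) * Real.exp (L*u + -L) := by
    rw [← reflect01 (fun v => v ^ (p/k-1) * (1-v) ^ ((q-p)/k-1) * Real.exp ((-A/(k*s) - B*s/A)*v))]
    apply setIntegral_congr_fun measurableSet_Ioo
    intro u _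
    simp only [sub_sub_cancel]
    rw [mul_comm (u ^ ((q-p)/k-1)) ((1-u) ^ (p/k-1))]
    congr 1
    rw [hL]; ring
  -- pointwise comparison inequality
  have ptwise : ∀ u ∈ Ioo (0:ℝ) 1,
      Real.exp r * (u ^ ((q-p)/k-1) * (1-u) ^ (p/k-1) * Real.exp (M*u)) ≤
        u ^ ((q-p)/k-1) * (1-u) ^ (p/k-1) * Real.exp (L*u + -L) := by
    intro u hu
    have hX : (0:ℝ) ≤ u ^ ((q-p)/k-1) * (1-u) ^ (p/k-1) :=
      mul_nonneg (rpow_nonneg hu.1.le _) (rpow_nonneg (by linarith [hu.2] : (0:ℝ) ≤ 1-u) _)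
    have harr : Real.exp r * (u ^ ((q-p)/k-1) * (1-u) ^ (p/k-1) * Real.exp (M*u))
        = u ^ ((q-p)/k-1) * (1-u) ^ (p/k-1) * Real.exp (M*u + r) := by
      simp only [hr, Real.exp_add]; ring
    rw [harr]
    apply mul_le_mul_of_nonneg_left _ hX
    apply exp_le_exp.2
    -- M*u + r ≤ L*u + -L
    have hks : 0 < k*s := mul_pos hk hs
    set x : ℝ := A/(k*s) with hx
    have hAk : A/k = x*s := by rw [hx]; field_simp
    set z : ℝ := B/A with hz
    have hBs : B*s/A = z*s := by rw [hz]; ring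
    have hxpos : 0 < x := div_pos hA hks
    have hzpos : 0 ≤ z := div_nonneg hB hA.le
    have hiden : (L*u + -L) - (M*u + r) = (1-s)*(u*x) + (1-s)*((1-u)*z) := by
      rw [hL, hM, hr, hAk, hBs]; ring
    have h1 : (0:ℝ) ≤ (1-s)*(u*x) :=
      mul_nonneg (by linarith [hs1]) (mul_nonneg hu.1.le hxpos.le)
    have h2 : (0:ℝ) ≤ (1-s)*((1-u)*z) :=
      mul_nonneg (by linarith [hs1]) (mul_nonneg (by linarith [hu.2]) hzpos)
    linarith [h1, h2, hiden]
  -- integral comparison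
  have intL : IntegrableOn (fun u : ℝ => Real.exp r * (u ^ ((q-p)/k-1) * (1-u) ^ (p/k-1) * Real.exp (M*u))) (Ioo 0 1) := by
    exact ((betaIntExp hd hc M r).congr_fun (fun u _ => by simp only [Real.exp_add]; ring) measurableSet_Ioo)
  have intR : IntegrableOn (fun u : ℝ => u ^ ((q-p)/k-1) * (1-u) ^ (p/k-1) * Real.exp (L*u + -L)) (Ioo 0 1) :=
    betaIntExp hd hc L (-L)
  have hint : (∫ u in Ioo (0:ℝ) 1, Real.exp r * (u ^ ((q-p)/k-1) * (1-u) ^ (p/k-1) * Real.exp (M*u)))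
      ≤ ∫ u in Ioo (0:ℝ) 1, u ^ ((q-p)/k-1) * (1-u) ^ (p/k-1) * Real.exp (L*u + -L) :=
    setIntegral_mono_on intL intR measurableSet_Ioo ptwise
  -- assemble
  unfold F1k
  rw [hqpp, hrefl]
  have hcoef := F1k_coef_nonneg hk hp hqp
  have hGam : Real.Gamma q / (Real.Gamma (q-p) * Real.Gamma p)
      = Real.Gamma q / (Real.Gamma p * Real.Gamma (q-p)) := by rw [mul_comm (Real.Gamma (q-p))]
  rw [hGam]
  set C : ℝ := 1/k * (Real.Gamma q / (Real.Gamma p * Real.Gamma (q-p))) with hC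
  calc Real.exp (-A/(k*s)) * (Real.exp (-B/A) *
        (C * ∫ u in Ioo (0:ℝ) 1, u ^ ((q-p)/k-1) * (1-u) ^ (p/k-1) * Real.exp (M*u)))
      = C * ∫ u in Ioo (0:ℝ) 1, Real.exp r * (u ^ ((q-p)/k-1) * (1-u) ^ (p/k-1) * Real.exp (M*u)) := by
        rw [integral_const_mul]
        simp only [hr, Real.exp_add]
        ring
    _ ≤ C * ∫ u in Ioo (0:ℝ) 1, u ^ ((q-p)/k-1) * (1-u) ^ (p/k-1) * Real.exp (L*u + -L) :=
        mul_le_mul_of_nonneg_left hint hcoef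

def Spos (m : ℕ) (c : ℝ) : Set (Fin m → ℝ) := {y | (∀ i, 0 < y i) ∧ ∑ i, y i < c}

lemma measSpos (m : ℕ) (c : ℝ) : MeasurableSet (Spos m c) := by
  have : Spos m c = (⋂ i, {y : Fin m → ℝ | 0 < y i}) ∩ {y | ∑ i, y i < c} := by
    ext y; simp [Spos, Set.mem_iInter]
  rw [this]
  exact (MeasurableSet.iInter fun i =>
    measurableSet_lt measurable_const (measurable_pi_apply i)).inter
    (measurableSet_lt (Finset.measurable_sum _ fun i _ => measurable_pi_apply i) measurable_const)

lemma measDirichletFn (m : ℕ) (a : Fin m → ℝ) (b c : ℝ) :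
    Measurable (fun y : Fin m → ℝ => (∏ i, y i ^ a i) * (c - ∑ i, y i) ^ b) := by
  exact (Finset.measurable_prod _ fun i _ => (measurable_pi_apply i).pow_const (a i)).mul
    ((measurable_const.sub (Finset.measurable_sum _ fun i _ => measurable_pi_apply i)).pow_const b)

lemma rpow_sum' {x : ℝ} (hx : 0 < x) {ι : Type*} (s : Finset ι) (f : ι → ℝ) :
    x ^ (∑ i ∈ s, f i) = ∏ i ∈ s, x ^ (f i) := by
  simp [Real.rpow_def_of_pos hx, Finset.mul_sum, Real.exp_sum]

lemma dirich (m : ℕ) : ∀ (a : Fin m → ℝ), (∀ i, -1 < a i) → ∀ (b : ℝ), -1 < b →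
    IntegrableOn (fun t : Fin m → ℝ => (∏ i, t i ^ a i) * (1 - ∑ i, t i) ^ b) (Spos m 1) := by
  induction m with
  | zero =>
    intro a _ b _
    have huniv : Spos 0 1 = univ := by
      ext y; simp [Spos]
    rw [huniv, integrableOn_univ]
    have : (fun t : Fin 0 → ℝ => (∏ i, t i ^ a i) * (1 - ∑ i, t i) ^ b)
        = fun _ => (1:ℝ) ^ b := by
      funext t; simp
    rw [this]
    refine ⟨aestronglyMeasurable_const, ?_⟩
    rw [hasFiniteIntegral_const_iff]
    right
    refine ⟨?_⟩; rw [MeasureTheory.volume_pi, Measure.pi_univ]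
    simp
  | succ m IH =>
    intro a ha b hb
    set a' : Fin m → ℝ := fun j => a ((0 : Fin (m+1)).succAbove j) with ha'
    have ha'lt : ∀ j, -1 < a' j := fun j => ha _
    set g1 : (Fin m → ℝ) → ℝ := fun y => (∏ i, y i ^ a' i) * (1 - ∑ i, y i) ^ b with hg1
    have IH' : IntegrableOn g1 (Spos m 1) := IH a' ha'lt b hb
    have hF1 : Integrable ((Spos m 1).indicator g1) :=
      (integrable_indicator_iff (measSpos m 1)).2 IH'
    set τ : ℝ := (∑ i, a' i) + b with hτdef
    have hτ : -1 < τ + m := by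
      have hsum : -(m:ℝ) ≤ ∑ i, a' i := by
        calc -(m:ℝ) = ∑ _i : Fin m, (-1 : ℝ) := by simp
          _ ≤ ∑ i, a' i := Finset.sum_le_sum fun i _ => (ha'lt i).le
      simp only [hτdef]; linarith
    -- scaling identity
    have hkey : ∀ c : ℝ, 0 < c →
        (Spos m c).indicator (fun y => (∏ i, y i ^ a' i) * (c - ∑ i, y i) ^ b)
          = fun y => c ^ τ * (Spos m 1).indicator g1 (c⁻¹ • y) := by
      intro c hc
      funext y
      have hmem : y ∈ Spos m c ↔ (c⁻¹ • y) ∈ Spos m 1 := by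
        simp only [Spos, Set.mem_setOf_eq, Pi.smul_apply, smul_eq_mul]
        constructor
        · rintro ⟨h1, h2⟩
          refine ⟨fun i => mul_pos (inv_pos.2 hc) (h1 i), ?_⟩
          rw [← Finset.mul_sum, inv_mul_eq_div, div_lt_one hc]; exact h2
        · rintro ⟨h1, h2⟩
          have h1' : ∀ i, 0 < y i := fun i => by
            have := h1 i
            have := (mul_pos_iff_of_pos_left (inv_pos.2 hc)).1 (h1 i)
            exact this
          refine ⟨h1', ?_⟩
          rw [← Finset.mul_sum, inv_mul_eq_div, div_lt_one hc] at h2; exact h2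
      by_cases hy : y ∈ Spos m c
      · rw [Set.indicator_of_mem hy, Set.indicator_of_mem (hmem.1 hy)]
        have hy1 : ∀ i, 0 < y i := hy.1
        have hy2 : ∑ i, y i < c := hy.2
        simp only [hg1, Pi.smul_apply, smul_eq_mul]
        have hprod : ∏ i, (c⁻¹ * y i) ^ a' i = (c⁻¹) ^ (∑ i, a' i) * ∏ i, y i ^ a' i := by
          rw [rpow_sum' (inv_pos.2 hc), ← Finset.prod_mul_distrib]
          exact Finset.prod_congr rfl fun i _ =>
            (Real.mul_rpow (inv_pos.2 hc).le (hy1 i).le).symm ▸ rfl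
        have hlast : (1 - ∑ i, c⁻¹ * y i) ^ b = (c⁻¹) ^ b * (c - ∑ i, y i) ^ b := by
          rw [← Finset.mul_sum]
          have : 1 - c⁻¹ * ∑ i, y i = c⁻¹ * (c - ∑ i, y i) := by
            field_simp
          rw [this, Real.mul_rpow (inv_pos.2 hc).le (by linarith : (0:ℝ) ≤ c - ∑ i, y i)]
        rw [hprod, hlast]
        rw [Real.inv_rpow hc.le, Real.inv_rpow hc.le, hτdef, Real.rpow_add hc]
        have h1 : (c:ℝ) ^ (∑ i, a' i) ≠ 0 := (Real.rpow_pos_of_pos hc _).ne'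
        have h2 : (c:ℝ) ^ b ≠ 0 := (Real.rpow_pos_of_pos hc _).ne'
        field_simp
        try ring
      · rw [Set.indicator_of_notMem hy, Set.indicator_of_notMem (fun h => hy (hmem.2 h)), mul_zero]
    -- scaled integrability and value
    have hscaleInt : ∀ c : ℝ, 0 < c →
        Integrable ((Spos m c).indicator (fun y => (∏ i, y i ^ a' i) * (c - ∑ i, y i) ^ b)) := by
      intro c hc
      rw [hkey c hc]
      exact (hF1.comp_smul (inv_ne_zero hc.ne')).const_mul _
    set D : ℝ := ∫ y, (Spos m 1).indicator g1 y with hD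
    have hscaleVal : ∀ c : ℝ, 0 < c →
        (∫ y, (Spos m c).indicator (fun y => (∏ i, y i ^ a' i) * (c - ∑ i, y i) ^ b) y)
          = c ^ (τ + (m:ℝ)) * D := by
      intro c hc
      rw [hkey c hc, integral_const_mul,
        Measure.integral_comp_smul volume (fun y => (Spos m 1).indicator g1 y) c⁻¹]
      have hrank : Module.finrank ℝ (Fin m → ℝ) = m := Module.finrank_fin_fun ℝ
      rw [hrank]
      have habs : |((c⁻¹) ^ m)⁻¹| = c ^ m := by
        rw [abs_of_pos (by positivity)]
        simp [inv_pow]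
      have hpow : c ^ (τ + (m:ℝ)) = c ^ τ * c ^ m := by
        rw [Real.rpow_add hc, Real.rpow_natCast]
      rw [habs, smul_eq_mul, hpow]
      ring
    -- reduction to the product space
    set e : (Fin (m+1) → ℝ) ≃ᵐ ℝ × (Fin m → ℝ) :=
      MeasurableEquiv.piFinSuccAbove (fun _ : Fin (m+1) => ℝ) 0 with he
    have hmp : MeasurePreserving e.symm volume volume :=
      (volume_preserving_piFinSuccAbove (fun _ : Fin (m+1) => ℝ) 0).symm _
    rw [← integrable_indicator_iff (measSpos (m+1) 1),
      ← hmp.integrable_comp_emb e.symm.measurableEmbedding]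
    set G : ℝ × (Fin m → ℝ) → ℝ := ((Spos (m+1) 1).indicator
      (fun t => (∏ i, t i ^ a i) * (1 - ∑ i, t i) ^ b)) ∘ e.symm with hGdef
    have hGmeas : Measurable G :=
      ((measDirichletFn (m+1) a b 1).indicator (measSpos (m+1) 1)).comp e.symm.measurable
    have hGfor : ∀ x y, G (x, y) = (Ioo (0:ℝ) 1).indicator (fun x' => x' ^ a 0) x *
        (Spos m (1-x)).indicator
          (fun y' => (∏ i, y' i ^ a' i) * ((1-x) - ∑ i, y' i) ^ b) y := by
      intro x y
      set t : Fin (m+1) → ℝ := e.symm (x, y) with htdef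
      have htins : t = Fin.insertNth 0 x y := rfl
      have ht0 : t 0 = x := by rw [htins]; simp
      have htj : ∀ j, t ((0 : Fin (m+1)).succAbove j) = y j := by
        intro j; rw [htins]; simp
      have hsum : ∑ i, t i = x + ∑ j, y j := by
        rw [Fin.sum_univ_succAbove _ 0, ht0]
        exact congrArg (x + ·) (Finset.sum_congr rfl fun j _ => htj j)
      have hprod : ∏ i, t i ^ a i = x ^ a 0 * ∏ j, y j ^ a' j := by
        rw [Fin.prod_univ_succAbove _ 0, ht0]
        exact congrArg (x ^ a 0 * ·) (Finset.prod_congr rfl fun j _ => by rw [htj j, ha'])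
      have hmemt : t ∈ Spos (m+1) 1 ↔
          ((0 < x ∧ ∀ j, 0 < y j) ∧ x + ∑ j, y j < 1) := by
        simp only [Spos, Set.mem_setOf_eq, hsum]
        constructor
        · rintro ⟨h1, h2⟩
          exact ⟨⟨ht0 ▸ h1 0, fun j => htj j ▸ h1 _⟩, h2⟩
        · rintro ⟨⟨hx0, hyj⟩, h2⟩
          refine ⟨fun i => ?_, h2⟩
          rcases Fin.eq_zero_or_eq_succ i with rfl | ⟨j, rfl⟩
          · rw [ht0]; exact hx0
          · have : (0 : Fin (m+1)).succAbove j = j.succ := Fin.succAbove_zero_apply j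
            rw [← this, htj j]; exact hyj j
      have hGt : G (x, y) =
          (Spos (m+1) 1).indicator (fun t => (∏ i, t i ^ a i) * (1 - ∑ i, t i) ^ b) t := rfl
      rw [hGt]
      by_cases hx : x ∈ Ioo (0:ℝ) 1
      · by_cases hy : y ∈ Spos m (1-x)
        · have hmem : t ∈ Spos (m+1) 1 :=
            hmemt.2 ⟨⟨hx.1, hy.1⟩, by have := hy.2; linarith⟩
          rw [Set.indicator_of_mem hmem, Set.indicator_of_mem hx, Set.indicator_of_mem hy,
            hprod, hsum, show 1 - (x + ∑ j, y j) = (1-x) - ∑ j, y j by ring]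
          ring
        · have hmem : t ∉ Spos (m+1) 1 := by
            intro hmem
            obtain ⟨⟨hx0, hyj⟩, h2⟩ := hmemt.1 hmem
            exact hy ⟨hyj, by linarith⟩
          rw [Set.indicator_of_notMem hmem, Set.indicator_of_notMem hy, mul_zero]
      · have hmem : t ∉ Spos (m+1) 1 := by
          intro hmem
          obtain ⟨⟨hx0, hyj⟩, h2⟩ := hmemt.1 hmem
          have hsnn : 0 ≤ ∑ j, y j := Finset.sum_nonneg fun j _ => (hyj j).le
          exact hx ⟨hx0, by linarith⟩
        rw [Set.indicator_of_notMem hmem, Set.indicator_of_notMem hx, zero_mul]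
    rw [MeasureTheory.Measure.volume_eq_prod]
    apply (integrable_prod_iff hGmeas.aestronglyMeasurable).2
    constructor
    · apply Filter.Eventually.of_forall
      intro x
      by_cases hx : x ∈ Ioo (0:ℝ) 1
      · have heq : (fun y => G (x, y)) = fun y => (x ^ a 0) * (Spos m (1-x)).indicator
            (fun y' => (∏ i, y' i ^ a' i) * ((1-x) - ∑ i, y' i) ^ b) y :=
          funext fun y => by rw [hGfor x y, Set.indicator_of_mem hx]
        rw [heq]
        exact (hscaleInt (1-x) (by have := hx.2; simp only [Set.mem_Ioo] at hx; linarith)).const_mul _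
      · have heq : (fun y => G (x, y)) = fun _ => (0:ℝ) :=
          funext fun y => by rw [hGfor x y, Set.indicator_of_notMem hx, zero_mul]
        rw [heq]
        exact integrable_zero _ _ _
    · have hGnn : ∀ x y, 0 ≤ G (x, y) := by
        intro x y
        rw [hGfor x y]
        refine mul_nonneg (Set.indicator_nonneg (fun u hu => Real.rpow_nonneg hu.1.le _) x)
          (Set.indicator_nonneg (fun y' hy' => mul_nonneg
            (Finset.prod_nonneg fun i _ => Real.rpow_nonneg (hy'.1 i).le _)
            (Real.rpow_nonneg (by have := hy'.2; linarith) _)) y)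
      have hval : (fun x => ∫ y, ‖G (x, y)‖) =
          fun x => (Ioo (0:ℝ) 1).indicator (fun x' => x' ^ a 0 * ((1-x') ^ (τ + (m:ℝ)) * D)) x := by
        funext x
        have hnormeq : (fun y => ‖G (x, y)‖) = fun y => G (x, y) :=
          funext fun y => norm_of_nonneg (hGnn x y)
        rw [hnormeq]
        by_cases hx : x ∈ Ioo (0:ℝ) 1
        · rw [Set.indicator_of_mem hx]
          have h1x : 0 < 1 - x := by simp only [Set.mem_Ioo] at hx; linarith
          have heq : (fun y => G (x, y)) = fun y => (x ^ a 0) * (Spos m (1-x)).indicator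
              (fun y' => (∏ i, y' i ^ a' i) * ((1-x) - ∑ i, y' i) ^ b) y :=
            funext fun y => by rw [hGfor x y, Set.indicator_of_mem hx]
          rw [heq, integral_const_mul, hscaleVal (1-x) h1x]
        · rw [Set.indicator_of_notMem hx]
          have heq : (fun y => G (x, y)) = fun _ => (0:ℝ) :=
            funext fun y => by rw [hGfor x y, Set.indicator_of_notMem hx, zero_mul]
          rw [heq, integral_zero]
      rw [hval, integrable_indicator_iff measurableSet_Ioo]
      have : IntegrableOn (fun x : ℝ => (x ^ a 0 * (1-x) ^ (τ + (m:ℝ))) * D) (Ioo 0 1) :=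
        (betaInt (ha 0) hτ).mul_const D
      exact this.congr_fun (fun x _ => by ring) measurableSet_Ioo

lemma measBary (m : ℕ) (i : Fin (m+1)) : Measurable (fun t : Fin m → ℝ => bary (m+1) t i) := by
  unfold bary
  by_cases h : (i:ℕ) < (m+1)-1
  · simp only [dif_pos h]
    exact measurable_pi_apply _
  · simp only [dif_neg h]
    exact measurable_const.sub (Finset.measurable_sum _ fun j _ => measurable_pi_apply j)

lemma baryProd (m : ℕ) (t : Fin m → ℝ) (c : Fin (m+1) → ℝ) :
    ∏ i, bary (m+1) t i ^ c i
      = (∏ j : Fin m, t j ^ c (Fin.castSucc j)) * (1 - ∑ j, t j) ^ c (Fin.last m) := by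
  rw [Fin.prod_univ_castSucc]
  congr 1
  · refine Finset.prod_congr rfl fun j _ => ?_
    have hb : bary (m+1) t (Fin.castSucc j) = t j := by
      unfold bary
      rw [dif_pos (by simpa using j.isLt)]
      exact congrArg t (Fin.ext (by simp))
    rw [hb]
  · have hb : bary (m+1) t (Fin.last m) = 1 - ∑ j, t j := by
      unfold bary
      rw [dif_neg (by simp)]
      exact rfl
    rw [hb]

lemma baryMem {m : ℕ} (hm : 1 ≤ m) {t : Fin m → ℝ} (ht : t ∈ Spos m 1) (i : Fin (m+1)) :
    0 < bary (m+1) t i ∧ bary (m+1) t i < 1 := by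
  obtain ⟨ht1, ht2⟩ := ht
  have hne : (Finset.univ : Finset (Fin m)).Nonempty := ⟨⟨0, hm⟩, Finset.mem_univ _⟩
  have hsnn : 0 < ∑ j, t j := Finset.sum_pos (fun j _ => ht1 j) hne
  unfold bary
  by_cases h : (i:ℕ) < (m+1)-1
  · rw [dif_pos h]
    refine ⟨ht1 _, ?_⟩
    have hle : t ⟨i, h⟩ ≤ ∑ j, t j :=
      Finset.single_le_sum (fun j _ => (ht1 j).le) (Finset.mem_univ _)
    linarith
  · rw [dif_neg h]
    constructor
    · show (0:ℝ) < 1 - ∑ j : Fin m, t j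
      linarith
    · show (1:ℝ) - ∑ j : Fin m, t j < 1
      linarith

theorem stmt19 (n : ℕ) (hn : 2 ≤ n) (k : ℝ) (hk : 0 < k)
    (p q η ζ : Fin n → ℝ)
    (hp : ∀ i, 0 < p i) (hqp : ∀ i, 0 < q i - p i)
    (hη : ∀ i, 0 < η i) (hζ : ∀ i, 0 ≤ ζ i)
    (hηζ : ∀ i, Real.sqrt ((ζ i)^k) ≤ (η i)^k)
    (φ : Fin n → ℝ) (hφ : ∀ i, 0 < φ i) :
    betaKe2 n k φ η * ∏ i, Real.exp (-((ζ i)^k)/(η i)^k) *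
        F1k k (q i - p i) (q i) ((η i)^k/k + (ζ i)^k/(η i)^k) ≤
      betaSecond n k p q η ζ φ := by
  obtain ⟨m, rfl⟩ : ∃ m, n = m + 1 := ⟨n - 1, by omega⟩
  have hm : 1 ≤ m := by omega
  unfold betaKe2 betaSecond
  rw [mul_assoc]
  have hk0 : (0:ℝ) ≤ 1 / k ^ ((m+1)-1) := by positivity
  apply mul_le_mul_of_nonneg_left _ hk0
  have hSeq : simplexInt (m+1) = Spos m 1 := rfl
  rw [hSeq, ← integral_mul_const]
  have hA : ∀ i, 0 < (η i)^k := fun i => Real.rpow_pos_of_pos (hη i) k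
  have hB : ∀ i, 0 ≤ (ζ i)^k := fun i => Real.rpow_nonneg (hζ i) k
  have hqp' : ∀ i, 0 < q i - (q i - p i) := fun i => by have := hp i; linarith
  have hCnn : (0:ℝ) ≤ ∏ i, Real.exp (-((ζ i)^k)/(η i)^k) *
      F1k k (q i - p i) (q i) ((η i)^k/k + (ζ i)^k/(η i)^k) :=
    Finset.prod_nonneg fun i _ => mul_nonneg (Real.exp_nonneg _)
      (F1k_nonneg hk (hqp i) (hqp' i) _)
  have hmeasg : Measurable (fun t : Fin m → ℝ => ∏ i, (bary (m+1) t i ^ (φ i / k - 1) *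
      F1k k (p i) (q i)
        (-((η i)^k)/(k * bary (m+1) t i) - (ζ i)^k * bary (m+1) t i / (η i)^k))) :=
    Finset.measurable_prod _ fun i _ => ((measBary m i).pow_const _).mul
      (((F1k_mono hk (hp i) (hqp i)).measurable).comp
        ((measurable_const.div ((measBary m i).const_mul k)).sub
          (((measBary m i).const_mul ((ζ i)^k)).div_const ((η i)^k))))
  apply integral_mono_of_nonneg
  · refine (ae_restrict_iff' (measSpos m 1)).2 (Filter.Eventually.of_forall fun t ht => ?_)
    dsimp only
    exact mul_nonneg (Finset.prod_nonneg fun i _ =>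
      mul_nonneg (Real.rpow_nonneg (baryMem hm ht i).1.le _) (Real.exp_nonneg _)) hCnn
  · -- integrability of the RHS integrand
    have hdom : IntegrableOn (fun t : Fin m → ℝ =>
        (∏ i : Fin (m+1), bary (m+1) t i ^ (φ i / k - 1)) * ∏ i, F1k k (p i) (q i) 0)
        (Spos m 1) := by
      have h1 := (dirich m (fun j => φ (Fin.castSucc j) / k - 1)
        (fun j => by have := div_pos (hφ (Fin.castSucc j)) hk; linarith)
        (φ (Fin.last m) / k - 1)
        (by have := div_pos (hφ (Fin.last m)) hk; linarith)).mul_const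
        (∏ i, F1k k (p i) (q i) 0)
      exact IntegrableOn.congr_fun h1 (fun t _ => by rw [baryProd]) (measSpos m 1)
    apply Integrable.mono hdom hmeasg.aestronglyMeasurable
    refine (ae_restrict_iff' (measSpos m 1)).2 (Filter.Eventually.of_forall fun t ht => ?_)
    beta_reduce
    have hbm := fun i => baryMem hm ht i
    have hgnn : (0:ℝ) ≤ ∏ i, (bary (m+1) t i ^ (φ i / k - 1) *
        F1k k (p i) (q i)
          (-((η i)^k)/(k * bary (m+1) t i) - (ζ i)^k * bary (m+1) t i / (η i)^k)) :=
      Finset.prod_nonneg fun i _ => mul_nonneg (Real.rpow_nonneg (hbm i).1.le _)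
        (F1k_nonneg hk (hp i) (hqp i) _)
    have hdnn : (0:ℝ) ≤ (∏ i : Fin (m+1), bary (m+1) t i ^ (φ i / k - 1)) *
        ∏ i, F1k k (p i) (q i) 0 :=
      mul_nonneg (Finset.prod_nonneg fun i _ => Real.rpow_nonneg (hbm i).1.le _)
        (Finset.prod_nonneg fun i _ => F1k_nonneg hk (hp i) (hqp i) _)
    rw [Real.norm_of_nonneg hgnn, Real.norm_of_nonneg hdnn, ← Finset.prod_mul_distrib]
    apply Finset.prod_le_prod
    · intro i _
      exact mul_nonneg (Real.rpow_nonneg (hbm i).1.le _) (F1k_nonneg hk (hp i) (hqp i) _)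
    · intro i _
      apply mul_le_mul_of_nonneg_left _ (Real.rpow_nonneg (hbm i).1.le _)
      apply F1k_mono hk (hp i) (hqp i)
      have h1 : 0 ≤ (η i)^k/(k * bary (m+1) t i) :=
        div_nonneg (hA i).le (mul_nonneg hk.le (hbm i).1.le)
      have h2 : 0 ≤ (ζ i)^k * bary (m+1) t i / (η i)^k :=
        div_nonneg (mul_nonneg (hB i) (hbm i).1.le) (hA i).le
      have h3 : -((η i)^k)/(k * bary (m+1) t i) = -((η i)^k/(k * bary (m+1) t i)) :=
        neg_div _ _
      linarith
  · refine (ae_restrict_iff' (measSpos m 1)).2 (Filter.Eventually.of_forall fun t ht => ?_)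
    dsimp only
    rw [← Finset.prod_mul_distrib]
    apply Finset.prod_le_prod
    · intro i _
      exact mul_nonneg (mul_nonneg (Real.rpow_nonneg (baryMem hm ht i).1.le _)
        (Real.exp_nonneg _)) (mul_nonneg (Real.exp_nonneg _)
          (F1k_nonneg hk (hqp i) (hqp' i) _))
    · intro i _
      have hb := baryMem hm ht i
      have hkey := key_lemma hk (hp i) (hqp i) (hA i) (hB i) hb.1 hb.2
      calc (bary (m+1) t i ^ (φ i / k - 1) * Real.exp (-((η i)^k)/(k * bary (m+1) t i))) *
            (Real.exp (-((ζ i)^k)/(η i)^k) *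
              F1k k (q i - p i) (q i) ((η i)^k/k + (ζ i)^k/(η i)^k))
          = bary (m+1) t i ^ (φ i / k - 1) *
            (Real.exp (-((η i)^k)/(k * bary (m+1) t i)) *
              (Real.exp (-((ζ i)^k)/(η i)^k) *
                F1k k (q i - p i) (q i) ((η i)^k/k + (ζ i)^k/(η i)^k))) := by ring
        _ ≤ bary (m+1) t i ^ (φ i / k - 1) *
            F1k k (p i) (q i)
              (-((η i)^k)/(k * bary (m+1) t i) - (ζ i)^k * bary (m+1) t i / (η i)^k) :=
            mul_le_mul_of_nonneg_left hkey (Real.rpow_nonneg hb.1.le _)
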